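/- arXiv:1205.2994 — 3 statements merged into one kernel-verified Lean document; each statement's English description precedes it below -/
import Mathlib

section
/- Let H and K be subgroups of a countable group G, and let d be a left-invariant proper metric on G. Then for every g ∈ G and every U > 0, there exists a constant κ = κ(H, gK, U) such that N_U(H) ∩ N_U(gK) ⊆ N_κ(H ∩ gKg⁻¹), where N_U denotes the closed U-neighborhood with respect to d. -/
/-- Hruska / Martinez-Pedroza: in a countable group with a left-invariant proper
metric, for subgroups `H, K`, any `g` and `U > 0`, there is `κ = κ(H, gK, U)` with
`N_U(H) ∩ N_U(gK) ⊆ N_κ(H ∩ gKg⁻¹)`. -/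
theorem neighborhoods_intersection_subset {G : Type*} [Group G] [Countable G]
    [MetricSpace G]
    (left_inv : ∀ g x y : G, dist (g * x) (g * y) = dist x y)
    (proper : ∀ r : ℝ, (Metric.closedBall (1 : G) r).Finite)
    (H K : Subgroup G) (g : G) (U : ℝ) (hU : 0 < U) :
    ∃ κ : ℝ, ∀ x : G,
      Metric.infDist x (H : Set G) ≤ U →
      Metric.infDist x ((g * ·) '' (K : Set G)) ≤ U →
      Metric.infDist x ((H : Set G) ∩ ((fun k => g * k * g⁻¹) '' (K : Set G))) ≤ κ := by
  classical
  set F : Finset G := (proper (4 * U)).toFinset with hF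
  set P : G → Prop := fun s => ∃ k ∈ (K : Set G), g * k * s⁻¹ ∈ H with hPdef
  set D : G → ℝ := fun s =>
    if hp : P s then dist (g * hp.choose * s⁻¹)⁻¹ (1 : G) else 0 with hDdef
  have hDnn : ∀ s, 0 ≤ D s := by
    intro s
    simp only [hDdef]
    split
    · exact dist_nonneg
    · exact le_refl 0
  refine ⟨2 * U + ∑ s ∈ F, D s, ?_⟩
  intro x hx1 hx2
  have hHne : (H : Set G).Nonempty := ⟨1, H.one_mem⟩
  have hKne : ((g * ·) '' (K : Set G)).Nonempty := ⟨g * 1, 1, K.one_mem, rfl⟩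
  obtain ⟨h, hhH, hxh⟩ :=
    (Metric.infDist_lt_iff hHne).1 (lt_of_le_of_lt hx1 (show U < 2*U by linarith))
  obtain ⟨y, hy, hxy⟩ :=
    (Metric.infDist_lt_iff hKne).1 (lt_of_le_of_lt hx2 (show U < 2*U by linarith))
  obtain ⟨k, hkK, rfl⟩ := hy
  simp only at hxy
  set s : G := h⁻¹ * (g * k) with hs
  have hgk : g * k = h * s := by rw [hs]; group
  have hsF : s ∈ F := by
    rw [hF, Set.Finite.mem_toFinset, Metric.mem_closedBall]
    have h1 : dist s 1 = dist (g * k) h := by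
      have := left_inv h s 1
      rw [mul_one, ← hgk] at this
      exact this.symm
    have h2 : dist (g * k) h ≤ dist (g * k) x + dist x h := dist_triangle _ _ _
    rw [dist_comm (g * k) x] at h2
    rw [h1]
    linarith
  have hp : P s := by
    refine ⟨k, hkK, ?_⟩
    have : g * k * s⁻¹ = h := by rw [hs]; group
    rw [this]; exact hhH
  obtain ⟨hksK, hhsH⟩ := hp.choose_spec
  set ks : G := hp.choose
  set hS : G := g * ks * s⁻¹ with hhS
  have hDs : D s = dist hS⁻¹ (1 : G) := by
    simp only [hDdef]
    rw [dif_pos hp]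
  set w : G := h * hS⁻¹ with hw
  have hwH : w ∈ (H : Set G) := H.mul_mem hhH (H.inv_mem hhsH)
  have hhval : h = g * k * s⁻¹ := by rw [hs]; group
  have hwIm : w ∈ ((fun k => g * k * g⁻¹) '' (K : Set G)) := by
    refine ⟨k * ks⁻¹, K.mul_mem hkK (K.inv_mem hksK), ?_⟩
    simp only
    rw [hw, hhS, hhval]; group
  have hdist_hw : dist h w = dist hS⁻¹ 1 := by
    have := left_inv h hS⁻¹ 1
    rw [mul_one] at this
    rw [hw, dist_comm, this]
  have hle : Metric.infDist x ((H : Set G) ∩ ((fun k => g * k * g⁻¹) '' (K : Set G)))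
      ≤ dist x w := Metric.infDist_le_dist_of_mem ⟨hwH, hwIm⟩
  have hDsum : D s ≤ ∑ t ∈ F, D t :=
    Finset.single_le_sum (fun t _ => hDnn t) hsF
  calc Metric.infDist x ((H : Set G) ∩ ((fun k => g * k * g⁻¹) '' (K : Set G)))
      ≤ dist x w := hle
    _ ≤ dist x h + dist h w := dist_triangle _ _ _
    _ = dist x h + D s := by rw [hdist_hw, hDs]
    _ ≤ 2 * U + ∑ t ∈ F, D t := by linarith
end

section
/- Let G be a group in which every subgroup of the form ⟨Ḣ, K̇⟩ below is separable. Let H', K' ≤ G with finite-index subgroups Ḣ ≤ H', K̇ ≤ K' such that the subgroup L = ⟨Ḣ, K̇⟩ is separable in the profinite topology and H'K' ∩ H'LK' = H'K' with g ∉ H'LK' for a given g ∉ H'K'. Then, writing H' = ⋃ᵢ hᵢḢ and K' = ⋃ⱼ K̇kⱼ as finite unions of cosets, H'K' ⊆ H'LK' = ⋃_{i,j} hᵢ L kⱼ, and the latter is a closed set in the profinite topology not containing g; hence H'K' is contained in a closed set avoiding g. -/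
/-- A subset `S` of a group `G` is separable if for every `g ∉ S` there is a
homomorphism `φ` from `G` to a finite group with `φ g ∉ φ '' S`; equivalently,
`S` is closed in the profinite topology on `G`. -/
def SepSet (G : Type*) [Group G] (S : Set G) : Prop :=
  ∀ g ∉ S, ∃ (F : Type) (_ : Group F) (_ : Finite F) (φ : G →* F), φ g ∉ φ '' S

lemma sepSet_translate {G : Type*} [Group G] {S : Set G} (hS : SepSet G S) (a b : G) :
    SepSet G ((fun x => a * x * b) '' S) := by
  intro g hg
  have h1 : a⁻¹ * g * b⁻¹ ∉ S := by
    intro h; exact hg ⟨a⁻¹ * g * b⁻¹, h, by group⟩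
  obtain ⟨F, grpF, finF, φ, hφ⟩ := hS _ h1
  refine ⟨F, grpF, finF, φ, ?_⟩
  rintro ⟨y, ⟨s, hs, rfl⟩, hyg⟩
  refine hφ ⟨s, hs, ?_⟩
  have : φ (a * s * b) = φ g := hyg
  have h2 : a⁻¹ * (a * s * b) * b⁻¹ = s := by group
  rw [← h2, map_mul, map_mul, this, map_mul, map_mul]

lemma sepSet_iUnion {G : Type*} [Group G] {ι : Type*} [Finite ι] (S : ι → Set G)
    (hS : ∀ i, SepSet G (S i)) : SepSet G (⋃ i, S i) := by
  obtain ⟨n, ⟨e⟩⟩ := Finite.exists_equiv_fin ι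
  intro g hg
  have hgi : ∀ j : Fin n, g ∉ S (e.symm j) := fun j hj =>
    hg (Set.mem_iUnion.mpr ⟨e.symm j, hj⟩)
  choose F grpF finF φ hφ using fun j => hS (e.symm j) g (hgi j)
  refine ⟨∀ j, F j, @Pi.group _ _ grpF, by
      letI := grpF; letI := finF; exact Pi.finite, ?_, ?_⟩
  · letI := grpF
    exact Pi.monoidHom φ
  · letI := grpF
    rintro ⟨x, hx, hxg⟩
    obtain ⟨i, hxi⟩ := Set.mem_iUnion.mp hx
    have : x ∈ S (e.symm (e i)) := by simpa using hxi
    exact hφ (e i) ⟨x, this, congrFun hxg (e i)⟩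


/-- If `Ḣ ≤ H'` and `K̇ ≤ K'` have finite index, `L = ⟨Ḣ, K̇⟩` is separable and
`g ∉ H'LK'`, then `H'K'` is contained in a separable (closed) set avoiding `g`
(namely `H'LK'`, a finite union of translates `hᵢ L kⱼ`). -/
theorem doubleCoset_in_closed_set {G : Type*} [Group G]
    (H' K' Hd Kd L : Subgroup G)
    (hHd : Hd ≤ H') (hKd : Kd ≤ K')
    (hHfin : Hd.relIndex H' ≠ 0) (hKfin : Kd.relIndex K' ≠ 0)
    (hL : L = Hd ⊔ Kd) (hLsep : SepSet G (L : Set G))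
    (g : G) (hg : g ∉ {x : G | ∃ h ∈ H', ∃ l ∈ L, ∃ k ∈ K', x = h * l * k}) :
    ∃ T : Set G, SepSet G T ∧
      {x : G | ∃ h ∈ H', ∃ k ∈ K', x = h * k} ⊆ T ∧ g ∉ T := by
  refine ⟨{x : G | ∃ h ∈ H', ∃ l ∈ L, ∃ k ∈ K', x = h * l * k}, ?_, ?_, hg⟩
  · -- separability
    have hHL : Hd ≤ L := hL ▸ le_sup_left
    have hKL : Kd ≤ L := hL ▸ le_sup_right
    set Qh := H' ⧸ Hd.subgroupOf H' with hQh
    set Qk := K' ⧸ Kd.subgroupOf K' with hQk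
    have finQh : Finite Qh := (Nat.card_ne_zero.mp hHfin).2
    have finQk : Finite Qk := (Nat.card_ne_zero.mp hKfin).2
    set Sfun : Qh × Qk → Set G :=
      fun p => (fun x => (p.1.out : G) * x * ((p.2.out : G))⁻¹) '' L with hSfun
    have hT : {x : G | ∃ h ∈ H', ∃ l ∈ L, ∃ k ∈ K', x = h * l * k} = ⋃ p, Sfun p := by
      ext x
      simp only [Set.mem_setOf_eq, Set.mem_iUnion]
      constructor
      · rintro ⟨h, hh, l, hl, k, hk, rfl⟩
        set qh : Qh := QuotientGroup.mk ⟨h, hh⟩ with hqh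
        set qk : Qk := QuotientGroup.mk ⟨k⁻¹, inv_mem hk⟩ with hqk
        have h1 : (qh.out : H')⁻¹ * ⟨h, hh⟩ ∈ Hd.subgroupOf H' :=
          QuotientGroup.eq.mp (QuotientGroup.out_eq' _)
        have h2 : (qk.out : K')⁻¹ * ⟨k⁻¹, inv_mem hk⟩ ∈ Kd.subgroupOf K' :=
          QuotientGroup.eq.mp (QuotientGroup.out_eq' _)
        rw [Subgroup.mem_subgroupOf] at h1 h2
        refine ⟨(qh, qk), (qh.out : G)⁻¹ * h * l * k * qk.out, ?_, by group⟩
        have hd1 : ((qh.out : G))⁻¹ * h ∈ L := hHL h1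
        have hd2 : ((qk.out : G))⁻¹ * k⁻¹ ∈ Kd := h2
        have hd2' : k * (qk.out : G) ∈ L := by
          have := hKL (inv_mem hd2)
          simpa [mul_inv_rev] using this
        have : ((qh.out : G))⁻¹ * h * l * (k * (qk.out : G)) ∈ L :=
          mul_mem (mul_mem hd1 hl) hd2'
        simpa [mul_assoc] using this
      · rintro ⟨p, l, hl, rfl⟩
        exact ⟨p.1.out, p.1.out.2, l, hl, ((p.2.out : G))⁻¹, inv_mem p.2.out.2, rfl⟩
    rw [hT]
    exact sepSet_iUnion Sfun fun p => sepSet_translate hLsep _ _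
  · rintro x ⟨h, hh, k, hk, rfl⟩
    exact ⟨h, hh, 1, one_mem L, k, hk, by group⟩
end

section
/- Let Y be a geodesic metric space, X a (μ,ε)-contracting subset, and γ a geodesic. Suppose z is a point on γ with d(z, X) ≥ μ(1,0), and let p be the maximal connected subsegment of γ containing z with d(p, X) ≥ μ(1,0). If the endpoints of γ lie in N_U(X) for some U ≥ 0, then d(z, X) ≤ 3·max(U, μ(1,0)) + ε(1,0). -/
/-- The closed `U`-neighborhood of a subset of a metric space. -/
def nbhd {Y : Type*} [MetricSpace Y] (U : ℝ) (X : Set Y) : Set Y :=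
  {y | Metric.infDist y X ≤ U}

/-- The set of `δ`-almost-nearest points of `X` to `y`. -/
def projSet {Y : Type*} [MetricSpace Y] (δ : ℝ) (X : Set Y) (y : Y) : Set Y :=
  {x ∈ X | dist y x ≤ Metric.infDist y X + δ}

/-- The projection of a subset `A` to `X`. -/
def projSetOn {Y : Type*} [MetricSpace Y] (δ : ℝ) (X A : Set Y) : Set Y :=
  ⋃ a ∈ A, projSet δ X a

/-- A `(λ, c)`-quasigeodesic, parameterized by arclength on `[a, b]`. -/
def IsQGeodesicOn {Y : Type*} [MetricSpace Y] (lam c : ℝ) (f : ℝ → Y) (a b : ℝ) : Prop :=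
  a ≤ b ∧ ∀ s ∈ Set.Icc a b, ∀ t ∈ Set.Icc a b,
    dist (f s) (f t) ≤ |s - t| ∧ |s - t| ≤ lam * dist (f s) (f t) + c

/-- A geodesic parameterized by arclength on `[a, b]`. -/
def IsGeodesicOn {Y : Type*} [MetricSpace Y] (f : ℝ → Y) (a b : ℝ) : Prop :=
  a ≤ b ∧ ∀ s ∈ Set.Icc a b, ∀ t ∈ Set.Icc a b, dist (f s) (f t) = |s - t|

/-- A preferred class of (parameterized) paths. -/
abbrev PathClass (Y : Type*) := (ℝ → Y) → ℝ → ℝ → Prop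

/-- The class `𝓛` contains all geodesics. -/
def ContainsGeodesics {Y : Type*} [MetricSpace Y] (𝓛 : PathClass Y) : Prop :=
  ∀ f a b, IsGeodesicOn f a b → 𝓛 f a b

/-- `X` is `(μ, ε)`-contracting with respect to the class `𝓛`: any
`(λ, c)`-quasigeodesic of `𝓛` at distance at least `μ(λ,c)` from `X` has
projection to `X` of diameter less than `ε(λ,c)`. -/
def Contracting {Y : Type*} [MetricSpace Y] (δ : ℝ) (μ ε : ℝ → ℝ → ℝ)
    (𝓛 : PathClass Y) (X : Set Y) : Prop :=
  ∀ lam c f a b, 1 ≤ lam → 0 ≤ c → 𝓛 f a b → IsQGeodesicOn lam c f a b →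
    (∀ s ∈ Set.Icc a b, μ lam c ≤ Metric.infDist (f s) X) →
    Metric.diam (projSetOn δ X (f '' Set.Icc a b)) < ε lam c


/-- If `γ` is a geodesic with endpoints in `N_U(X)` for a `(μ,ε)`-contracting set `X`,
`z = f t₀` is a point of `γ` with `d(z, X) ≥ μ(1,0)`, and `[s₁, s₂]` is the maximal
subsegment of `γ` containing `t₀` staying at distance `≥ μ(1,0)` from `X`, then
`d(z, X) ≤ 3 max(U, μ(1,0)) + ε(1,0)`. -/
theorem dist_le_of_maximal_far_segment {Y : Type*} [MetricSpace Y]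
    (δ : ℝ) (hδ : 0 < δ) (μ ε : ℝ → ℝ → ℝ) (𝓛 : PathClass Y)
    (hgeo : ContainsGeodesics 𝓛) (X : Set Y) (hX : Contracting δ μ ε 𝓛 X)
    (f : ℝ → Y) (a b : ℝ) (hf : IsGeodesicOn f a b)
    (U : ℝ) (hU : 0 ≤ U) (ha : f a ∈ nbhd U X) (hb : f b ∈ nbhd U X)
    (t₀ : ℝ) (ht₀ : t₀ ∈ Set.Icc a b) (hz : μ 1 0 ≤ Metric.infDist (f t₀) X)
    (s₁ s₂ : ℝ) (hsub : Set.Icc s₁ s₂ ⊆ Set.Icc a b) (ht₀mem : t₀ ∈ Set.Icc s₁ s₂)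
    (hfar : ∀ s ∈ Set.Icc s₁ s₂, μ 1 0 ≤ Metric.infDist (f s) X)
    (hmax : ∀ s₁' s₂', s₁' ≤ s₁ → s₂ ≤ s₂' → Set.Icc s₁' s₂' ⊆ Set.Icc a b →
      (∀ s ∈ Set.Icc s₁' s₂', μ 1 0 ≤ Metric.infDist (f s) X) → s₁' = s₁ ∧ s₂' = s₂) :
    Metric.infDist (f t₀) X ≤ 3 * max U (μ 1 0) + ε 1 0 := by
  obtain ⟨hab, hgeod⟩ := hf
  obtain ⟨hs₁t, hts₂⟩ := ht₀mem
  have hs12 : s₁ ≤ s₂ := hs₁t.trans hts₂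
  have hmem1 : s₁ ∈ Set.Icc a b := hsub ⟨le_rfl, hs12⟩
  have hmem2 : s₂ ∈ Set.Icc a b := hsub ⟨hs12, le_rfl⟩
  have hgeo' : IsGeodesicOn f s₁ s₂ :=
    ⟨hs12, fun s hs t ht => hgeod s (hsub hs) t (hsub ht)⟩
  have hqg : IsQGeodesicOn 1 0 f s₁ s₂ := by
    refine ⟨hs12, fun s hs t ht => ?_⟩
    have h := hgeo'.2 s hs t ht
    constructor <;> rw [h] <;> linarith [abs_nonneg (s - t)]
  have hdiam := hX 1 0 f s₁ s₂ le_rfl le_rfl (hgeo f s₁ s₂ hgeo') hqg hfar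
  have hE : 0 < ε 1 0 := lt_of_le_of_lt Metric.diam_nonneg hdiam
  set K := max U (μ 1 0) with hKdef
  have hK0 : 0 ≤ K := hU.trans (le_max_left _ _)
  rcases Set.eq_empty_or_nonempty X with hXe | hXne
  · rw [hXe, Metric.infDist_empty]; linarith
  -- endpoint bounds
  have hdistg : ∀ s ∈ Set.Icc a b, ∀ t ∈ Set.Icc a b,
      Metric.infDist (f s) X ≤ Metric.infDist (f t) X + |s - t| := by
    intro s hs t ht
    calc Metric.infDist (f s) X ≤ Metric.infDist (f t) X + dist (f s) (f t) :=
        Metric.infDist_le_infDist_add_dist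
    _ = Metric.infDist (f t) X + |s - t| := by rw [hgeod s hs t ht]
  have hg1 : Metric.infDist (f s₁) X ≤ K := by
    rcases eq_or_lt_of_le hmem1.1 with h | h
    · rw [← h]; exact le_trans ha (le_max_left _ _)
    · by_contra hc
      push_neg at hc
      have hMlt : μ 1 0 < Metric.infDist (f s₁) X := (le_max_right _ _).trans_lt hc
      set η := min (s₁ - a) (Metric.infDist (f s₁) X - μ 1 0) with hηdef
      have hη : 0 < η := lt_min (by linarith) (by linarith)
      have hηa : a ≤ s₁ - η := by
        have := min_le_left (s₁ - a) (Metric.infDist (f s₁) X - μ 1 0); linarith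
      have hsub' : Set.Icc (s₁ - η) s₂ ⊆ Set.Icc a b := fun s hs =>
        ⟨hηa.trans hs.1, hs.2.trans hmem2.2⟩
      have hfar' : ∀ s ∈ Set.Icc (s₁ - η) s₂, μ 1 0 ≤ Metric.infDist (f s) X := by
        intro s hs
        rcases le_total s₁ s with h' | h'
        · exact hfar s ⟨h', hs.2⟩
        · have hd := hdistg s₁ hmem1 s (hsub' hs)
          have habs : |s₁ - s| ≤ η := by
            rw [abs_of_nonneg (by linarith)]; linarith [hs.1]
          have := min_le_right (s₁ - a) (Metric.infDist (f s₁) X - μ 1 0)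
          linarith
      have := (hmax (s₁ - η) s₂ (by linarith) le_rfl hsub' hfar').1
      linarith
  have hg2 : Metric.infDist (f s₂) X ≤ K := by
    rcases eq_or_lt_of_le hmem2.2 with h | h
    · rw [h]; exact le_trans hb (le_max_left _ _)
    · by_contra hc
      push_neg at hc
      have hMlt : μ 1 0 < Metric.infDist (f s₂) X := (le_max_right _ _).trans_lt hc
      set η := min (b - s₂) (Metric.infDist (f s₂) X - μ 1 0) with hηdef
      have hη : 0 < η := lt_min (by linarith) (by linarith)
      have hηb : s₂ + η ≤ b := by
        have := min_le_left (b - s₂) (Metric.infDist (f s₂) X - μ 1 0); linarith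
      have hsub' : Set.Icc s₁ (s₂ + η) ⊆ Set.Icc a b := fun s hs =>
        ⟨hmem1.1.trans hs.1, hs.2.trans hηb⟩
      have hfar' : ∀ s ∈ Set.Icc s₁ (s₂ + η), μ 1 0 ≤ Metric.infDist (f s) X := by
        intro s hs
        rcases le_total s s₂ with h' | h'
        · exact hfar s ⟨hs.1, h'⟩
        · have hd := hdistg s₂ hmem2 s (hsub' hs)
          have habs : |s₂ - s| ≤ η := by
            rw [abs_of_nonpos (by linarith)]; linarith [hs.2]
          have := min_le_right (b - s₂) (Metric.infDist (f s₂) X - μ 1 0)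
          linarith
      have := (hmax s₁ (s₂ + η) le_rfl (by linarith) hsub' hfar').2
      linarith
  -- projSetOn is bounded
  have hbdd : Bornology.IsBounded (projSetOn δ X (f '' Set.Icc s₁ s₂)) := by
    apply Bornology.IsBounded.subset
      (Metric.isBounded_closedBall (x := f s₁)
        (r := 2 * (s₂ - s₁) + Metric.infDist (f s₁) X + δ))
    intro x hx
    simp only [projSetOn, Set.mem_iUnion, Set.mem_image] at hx
    obtain ⟨y, ⟨u, hu, rfl⟩, hx⟩ := hx
    obtain ⟨hxX, hxd⟩ := hx
    have h1 : Metric.infDist (f u) X ≤ Metric.infDist (f s₁) X + |u - s₁| :=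
      hdistg u (hsub hu) s₁ hmem1
    have h2 : dist (f s₁) (f u) = |s₁ - u| := hgeod s₁ hmem1 u (hsub hu)
    have habs : |u - s₁| ≤ s₂ - s₁ := by
      rw [abs_of_nonneg (by linarith [hu.1])]; linarith [hu.2]
    have habs' : |s₁ - u| ≤ s₂ - s₁ := by
      rw [abs_of_nonpos (by linarith [hu.1])]; linarith [hu.2]
    rw [Metric.mem_closedBall]
    calc dist x (f s₁) ≤ dist x (f u) + dist (f u) (f s₁) := dist_triangle _ _ _
      _ = dist (f u) x + dist (f s₁) (f u) := by rw [dist_comm x (f u), dist_comm (f u) (f s₁)]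
      _ ≤ 2 * (s₂ - s₁) + Metric.infDist (f s₁) X + δ := by
          rw [h2]; linarith
  -- length bound
  have hlen : s₂ - s₁ ≤ 2 * K + ε 1 0 := by
    apply le_of_forall_pos_le_add
    intro c hc
    set δ' := min (c / 2) δ with hδ'def
    have hδ'0 : 0 < δ' := lt_min (by linarith) hδ
    have hδ'δ : δ' ≤ δ := min_le_right _ _
    have hδ'c : δ' ≤ c / 2 := min_le_left _ _
    obtain ⟨p₁, hp₁X, hp₁d⟩ := (Metric.infDist_lt_iff hXne).1
      (show Metric.infDist (f s₁) X < Metric.infDist (f s₁) X + δ' by linarith)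
    obtain ⟨p₂, hp₂X, hp₂d⟩ := (Metric.infDist_lt_iff hXne).1
      (show Metric.infDist (f s₂) X < Metric.infDist (f s₂) X + δ' by linarith)
    have hp₁mem : p₁ ∈ projSetOn δ X (f '' Set.Icc s₁ s₂) := by
      simp only [projSetOn, Set.mem_iUnion, Set.mem_image]
      exact ⟨f s₁, ⟨s₁, ⟨le_rfl, hs12⟩, rfl⟩, hp₁X, by linarith⟩
    have hp₂mem : p₂ ∈ projSetOn δ X (f '' Set.Icc s₁ s₂) := by
      simp only [projSetOn, Set.mem_iUnion, Set.mem_image]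
      exact ⟨f s₂, ⟨s₂, ⟨hs12, le_rfl⟩, rfl⟩, hp₂X, by linarith⟩
    have hpp : dist p₁ p₂ ≤ Metric.diam (projSetOn δ X (f '' Set.Icc s₁ s₂)) :=
      Metric.dist_le_diam_of_mem hbdd hp₁mem hp₂mem
    have hds : dist (f s₁) (f s₂) = s₂ - s₁ := by
      rw [hgeod s₁ hmem1 s₂ hmem2, abs_of_nonpos (by linarith)]; ring
    have htri : dist (f s₁) (f s₂) ≤ dist (f s₁) p₁ + dist p₁ p₂ + dist p₂ (f s₂) :=
      dist_triangle4 _ _ _ _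
    rw [dist_comm p₂ (f s₂)] at htri
    rw [hds] at htri
    linarith
  -- combine
  have h1 : Metric.infDist (f t₀) X ≤ Metric.infDist (f s₁) X + (t₀ - s₁) := by
    have := hdistg t₀ ht₀ s₁ hmem1
    rw [abs_of_nonneg (by linarith)] at this; exact this
  have h2 : Metric.infDist (f t₀) X ≤ Metric.infDist (f s₂) X + (s₂ - t₀) := by
    have := hdistg t₀ ht₀ s₂ hmem2
    rw [abs_of_nonpos (by linarith)] at this; linarith
  rcases le_total (t₀ - s₁) (s₂ - t₀) with h | h
  · linarith
  · linarith
end
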